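/- The linear scattering operator L defined by Lf(v) = ∫_{−1}^1 s(v,v')(f(v') − f(v)) dv', with symmetric kernel s satisfying 0 < s_m ≤ s(v,v') ≤ s_M and ∫_{−1}^1 s(v,v')dv' = 1, satisfies ⟨φ Lφ⟩ ≤ −2 s_m ⟨φ²⟩ for every φ ∈ L²([−1,1]) with ⟨φ⟩ = 0, where ⟨h⟩ = (1/2)∫_{−1}^1 h(v)dv. -/

import Mathlib

open MeasureTheory

/-- spectral gap estimate ⟨φLφ⟩ ≤ −2s_m⟨φ²⟩ for ⟨φ⟩ = 0, where
Lf(v) = ∫_{-1}^1 s(v,v')(f(v') − f(v))dv' with symmetric kernel s,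
0 < s_m ≤ s ≤ s_M, ∫_{-1}^1 s(v,v')dv' = 1, and ⟨h⟩ = (1/2)∫_{-1}^1 h. -/
theorem scattering_spectral_gap (s : ℝ → ℝ → ℝ) (sm sM : ℝ)
    (hs_meas : Measurable (Function.uncurry s))
    (hs_symm : ∀ v v', v ∈ Set.Icc (-1 : ℝ) 1 → v' ∈ Set.Icc (-1 : ℝ) 1 →
      s v v' = s v' v)
    (hsm : 0 < sm)
    (hbound : ∀ v v', v ∈ Set.Icc (-1 : ℝ) 1 → v' ∈ Set.Icc (-1 : ℝ) 1 →
      sm ≤ s v v' ∧ s v v' ≤ sM)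
    (hnorm : ∀ v ∈ Set.Icc (-1 : ℝ) 1, (∫ v' in (-1 : ℝ)..1, s v v') = 1)
    (φ : ℝ → ℝ)
    (hφ : MemLp φ 2 (volume.restrict (Set.Icc (-1 : ℝ) 1)))
    (hφavg : (1 / 2) * ∫ v in (-1 : ℝ)..1, φ v = 0) :
    (1 / 2) * ∫ v in (-1 : ℝ)..1,
        φ v * (∫ v' in (-1 : ℝ)..1, s v v' * (φ v' - φ v))
      ≤ -(2 * sm) * ((1 / 2) * ∫ v in (-1 : ℝ)..1, (φ v) ^ 2) := by
  have hle : (-1:ℝ) ≤ 1 := by norm_num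
  simp only [intervalIntegral.integral_of_le hle] at hnorm hφavg ⊢
  set I : Set ℝ := Set.Ioc (-1:ℝ) 1 with hIdef
  have hImeas : MeasurableSet I := measurableSet_Ioc
  set μ : Measure ℝ := volume.restrict I with hμdef
  haveI hμfin : IsFiniteMeasure μ := by
    constructor
    rw [hμdef, Measure.restrict_apply_univ, hIdef, Real.volume_Ioc]
    exact ENNReal.ofReal_lt_top
  have hsub : I ⊆ Set.Icc (-1:ℝ) 1 := Set.Ioc_subset_Icc_self
  have hφ2 : MemLp φ 2 μ := hφ.mono_measure (Measure.restrict_mono hsub le_rfl)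
  have hφm : AEStronglyMeasurable φ μ := hφ2.aestronglyMeasurable
  have hφsq : Integrable (fun v => φ v ^ 2) μ := hφ2.integrable_sq
  have hφint : Integrable φ μ := hφ2.integrable one_le_two
  have hφ0 : ∫ v, φ v ∂μ = 0 := by linarith
  set P : Measure (ℝ × ℝ) := μ.prod μ with hPdef
  have haeIcc : ∀ᵐ z ∂P, z.1 ∈ Set.Icc (-1:ℝ) 1 ∧ z.2 ∈ Set.Icc (-1:ℝ) 1 := by
    have hP : P = (volume.prod volume).restrict (I ×ˢ I) := by
      rw [hPdef, hμdef, Measure.prod_restrict]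
    rw [hP]
    filter_upwards [ae_restrict_mem (hImeas.prod hImeas)] with z hz
    exact ⟨hsub hz.1, hsub hz.2⟩
  have hKer : AEStronglyMeasurable (fun z : ℝ × ℝ => s z.1 z.2) P :=
    hs_meas.aestronglyMeasurable
  have hsM : 0 < sM := lt_of_lt_of_le hsm
    ((hbound 0 0 (by norm_num) (by norm_num)).1.trans (hbound 0 0 (by norm_num) (by norm_num)).2)
  have hker_bound : ∀ᵐ z ∂P, |s z.1 z.2| ≤ sM := by
    filter_upwards [haeIcc] with z hz
    have h := hbound z.1 z.2 hz.1 hz.2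
    rw [abs_le]; constructor <;> nlinarith [h.1, h.2]
  have hmulker : ∀ (g : ℝ × ℝ → ℝ), Integrable g P →
      Integrable (fun z => s z.1 z.2 * g z) P := by
    intro g hg
    refine (hg.abs.const_mul sM).mono' (hKer.mul hg.aestronglyMeasurable) ?_
    filter_upwards [hker_bound] with z hz
    rw [Real.norm_eq_abs, abs_mul]
    exact mul_le_mul_of_nonneg_right hz (abs_nonneg _)
  have iφφ : Integrable (fun z : ℝ × ℝ => φ z.1 * φ z.2) P := hφint.mul_prod hφint
  have iφ1sq : Integrable (fun z : ℝ × ℝ => φ z.1 ^ 2) P := by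
    have := hφsq.mul_prod (integrable_const (μ := μ) (1:ℝ))
    simpa using this
  have iφ2sq : Integrable (fun z : ℝ × ℝ => φ z.2 ^ 2) P := by
    have := (integrable_const (μ := μ) (1:ℝ)).mul_prod hφsq
    simpa using this
  have iH : Integrable (fun z : ℝ × ℝ => φ z.1 * (s z.1 z.2 * (φ z.2 - φ z.1))) P := by
    have he : (fun z : ℝ × ℝ => φ z.1 * (s z.1 z.2 * (φ z.2 - φ z.1)))
        = fun z => s z.1 z.2 * (φ z.1 * φ z.2 - φ z.1 ^ 2) := by funext z; ring
    rw [he]; exact hmulker _ (iφφ.sub iφ1sq)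
  -- value facts
  set B : ℝ := ∫ v, φ v ^ 2 ∂μ with hBdef
  have hT0 : ∫ z : ℝ × ℝ, φ z.1 * φ z.2 ∂P = 0 := by
    rw [integral_prod_mul, hφ0, zero_mul]
  have hμuniv : (μ Set.univ).toReal = 2 := by
    rw [hμdef, Measure.restrict_apply_univ, hIdef, Real.volume_Ioc]
    norm_num
  have hTC : ∫ z : ℝ × ℝ, φ z.1 ^ 2 ∂P = 2 * B := by
    have := integral_prod_mul (μ := μ) (ν := μ) (fun v => φ v ^ 2) (fun _ => (1:ℝ))
    simp only [mul_one, integral_const, smul_eq_mul] at this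
    rw [this, measureReal_def, hμuniv]; ring
  have hTD : ∫ z : ℝ × ℝ, φ z.2 ^ 2 ∂P = 2 * B := by
    have := integral_prod_mul (μ := μ) (ν := μ) (fun _ => (1:ℝ)) (fun v => φ v ^ 2)
    simp only [one_mul, integral_const, smul_eq_mul] at this
    rw [this, measureReal_def, hμuniv]; ring
  have hTA : ∫ z : ℝ × ℝ, s z.1 z.2 * φ z.1 ^ 2 ∂P = B := by
    rw [hPdef, ← MeasureTheory.integral_integral (f := fun v v' => s v v' * φ v ^ 2) (by exact hmulker _ iφ1sq)]
    have hae : ∀ᵐ v ∂μ, (∫ v', s v v' * φ v ^ 2 ∂μ) = φ v ^ 2 := by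
      filter_upwards [ae_restrict_mem hImeas] with v hv
      rw [integral_mul_const, hnorm v (hsub hv), one_mul]
    rw [integral_congr_ae hae]
  have hTB : ∫ z : ℝ × ℝ, s z.1 z.2 * φ z.2 ^ 2 ∂P = B := by
    have hsymm_ae : ∀ᵐ z ∂P, s z.1 z.2 * φ z.2 ^ 2 = s z.2 z.1 * φ z.2 ^ 2 := by
      filter_upwards [haeIcc] with z hz
      rw [hs_symm _ _ hz.1 hz.2]
    rw [integral_congr_ae hsymm_ae, hPdef]
    have hswap := MeasureTheory.integral_prod_swap (μ := μ) (ν := μ)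
      (fun z : ℝ × ℝ => s z.1 z.2 * φ z.1 ^ 2)
    simp only [Prod.fst_swap, Prod.snd_swap] at hswap
    rw [hswap, ← hPdef, hTA]
  -- the comparison function G
  set G : ℝ × ℝ → ℝ := fun z => sm * (φ z.1 * φ z.2) +
      (s z.1 z.2 * φ z.1 ^ 2 + s z.1 z.2 * φ z.2 ^ 2 - sm * φ z.1 ^ 2 - sm * φ z.2 ^ 2) / 2
      - s z.1 z.2 * φ z.1 ^ 2 with hGdef
  have i1 := iφφ.const_mul sm
  have i2 := hmulker _ iφ1sq
  have i3 := hmulker _ iφ2sq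
  have i4 := iφ1sq.const_mul sm
  have i5 := iφ2sq.const_mul sm
  have imid : Integrable (fun z : ℝ × ℝ => (s z.1 z.2 * φ z.1 ^ 2 + s z.1 z.2 * φ z.2 ^ 2
      - sm * φ z.1 ^ 2 - sm * φ z.2 ^ 2) / 2) P := (((i2.add i3).sub i4).sub i5).div_const 2
  have iG : Integrable G P := (i1.add imid).sub i2
  have hmono : ∫ z, φ z.1 * (s z.1 z.2 * (φ z.2 - φ z.1)) ∂P ≤ ∫ z, G z ∂P := by
    refine integral_mono_ae iH iG ?_
    filter_upwards [haeIcc] with z hz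
    have hb := hbound z.1 z.2 hz.1 hz.2
    simp only [hGdef]
    nlinarith [mul_nonneg (sub_nonneg.2 hb.1) (sq_nonneg (φ z.1 - φ z.2))]
  have isum : Integrable (fun z : ℝ × ℝ => sm * (φ z.1 * φ z.2) +
      (s z.1 z.2 * φ z.1 ^ 2 + s z.1 z.2 * φ z.2 ^ 2 - sm * φ z.1 ^ 2 - sm * φ z.2 ^ 2) / 2) P :=
    i1.add imid
  have isub1 : Integrable (fun z : ℝ × ℝ => s z.1 z.2 * φ z.1 ^ 2 + s z.1 z.2 * φ z.2 ^ 2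
      - sm * φ z.1 ^ 2 - sm * φ z.2 ^ 2) P := ((i2.add i3).sub i4).sub i5
  have isub2 : Integrable (fun z : ℝ × ℝ => s z.1 z.2 * φ z.1 ^ 2 + s z.1 z.2 * φ z.2 ^ 2
      - sm * φ z.1 ^ 2) P := (i2.add i3).sub i4
  have iadd : Integrable (fun z : ℝ × ℝ => s z.1 z.2 * φ z.1 ^ 2 + s z.1 z.2 * φ z.2 ^ 2) P :=
    i2.add i3
  have hGval : ∫ z, G z ∂P = -2 * sm * B := by
    simp only [hGdef]
    rw [integral_sub isum i2, integral_add i1 imid, integral_div,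
      integral_sub isub2 i5, integral_sub iadd i4,
      integral_add i2 i3, integral_const_mul, integral_const_mul, integral_const_mul,
      hT0, hTA, hTB, hTC, hTD]
    ring
  -- final: express LHS as product integral
  have step1 : ∫ v, φ v * (∫ v', s v v' * (φ v' - φ v) ∂μ) ∂μ
      = ∫ z : ℝ × ℝ, φ z.1 * (s z.1 z.2 * (φ z.2 - φ z.1)) ∂P := by
    rw [hPdef, ← MeasureTheory.integral_integral (f := fun v v' => φ v * (s v v' * (φ v' - φ v))) (by exact iH)]
    exact integral_congr_ae (Filter.Eventually.of_forall fun v =>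
      (integral_const_mul _ _).symm)
  rw [step1]
  nlinarith [hmono, hGval]
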